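/- Let F be a field and P a regular n×n matrix polynomial over F all of whose entries have degree at most g. Then deg(det P) + v = g·n, where v is the multiplicity of λ as a factor of det(rev_g P). In particular, if g equals the degree d of P and the leading coefficient of P is invertible (i.e. P is strictly regular), then deg(det P) = d·n. -/

import Mathlib

open Polynomial

/-- Grade-`g` reversal of a matrix polynomial, taken entrywise. -/
noncomputable def revMat {F : Type*} [Field F] {m n : ℕ} (g : ℕ)
    (P : Matrix (Fin m) (Fin n) F[X]) : Matrix (Fin m) (Fin n) F[X] :=
  Matrix.of fun i j => ∑ t ∈ Finset.range (g + 1), C ((P i j).coeff t) * X ^ (g - t)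

/-- The multiplicity of `f` in `h`: the largest `t` with `f ^ t ∣ h`. -/
noncomputable def polyMult {F : Type*} [Field F] (f h : F[X]) : ℕ :=
  sSup {t : ℕ | f ^ t ∣ h}

/-- The coefficient matrix of `λ^d` in the entries of `P` (the leading coefficient
when `P` has degree `d`). -/
def leadMat {F : Type*} [Field F] {n : ℕ} (P : Matrix (Fin n) (Fin n) F[X]) (d : ℕ) :
    Matrix (Fin n) (Fin n) F :=
  Matrix.of fun i j => (P i j).coeff d

section Aux
variable {F : Type*} [Field F]

lemma reflect_sum' {ι : Type*} (s : Finset ι) (f : ι → F[X]) (N : ℕ) :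
    reflect N (∑ i ∈ s, f i) = ∑ i ∈ s, reflect N (f i) := by
  classical
  induction s using Finset.induction with
  | empty => simp [reflect_zero]
  | insert _ _ h ih => simp [Finset.sum_insert h, reflect_add, ih]

lemma reflect_prod' {ι : Type*} (s : Finset ι) (f : ι → F[X]) (g : ℕ)
    (h : ∀ i ∈ s, (f i).natDegree ≤ g) :
    reflect (g * s.card) (∏ i ∈ s, f i) = ∏ i ∈ s, reflect g (f i) := by
  classical
  induction s using Finset.induction with
  | empty => simp [reflect_one]
  | @insert a s ha ih =>
    rw [Finset.prod_insert ha, Finset.prod_insert ha, Finset.card_insert_of_notMem ha,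
      mul_add, mul_one, add_comm,
      reflect_mul _ _ (h a (Finset.mem_insert_self a s))
        (le_trans (natDegree_prod_le s f) ?_),
      ih (fun i hi => h i (Finset.mem_insert_of_mem hi))]
    calc ∑ i ∈ s, (f i).natDegree ≤ ∑ _i ∈ s, g :=
          Finset.sum_le_sum (fun i hi => h i (Finset.mem_insert_of_mem hi))
      _ = g * s.card := by rw [Finset.sum_const, smul_eq_mul, mul_comm]

lemma revMat_entry_eq_reflect (g : ℕ) (p : F[X]) (hp : p.natDegree ≤ g) :
    ∑ t ∈ Finset.range (g + 1), C (p.coeff t) * X ^ (g - t) = reflect g p := by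
  conv_rhs => rw [p.as_sum_range' (g+1) (Nat.lt_succ_of_le hp)]
  rw [reflect_sum']
  refine Finset.sum_congr rfl (fun t ht => ?_)
  rw [← C_mul_X_pow_eq_monomial, reflect_C_mul_X_pow,
    revAt_le (Nat.lt_succ_iff.mp (Finset.mem_range.mp ht))]

lemma natTrailingDegree_reflect' (N : ℕ) (p : F[X]) (hp : p ≠ 0) (hd : p.natDegree ≤ N) :
    (reflect N p).natTrailingDegree = N - p.natDegree := by
  have hc : (reflect N p).coeff (N - p.natDegree) ≠ 0 := by
    rw [coeff_reflect, revAt_le (Nat.sub_le N _), Nat.sub_sub_self hd]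
    exact mt leadingCoeff_eq_zero.mp hp
  refine le_antisymm (natTrailingDegree_le_of_ne_zero hc) (le_natTrailingDegree ?_ ?_)
  · exact fun h => hc (by simp [h])
  · intro m hm
    rw [coeff_reflect, revAt_le (le_trans hm.le (Nat.sub_le N _))]
    exact coeff_eq_zero_of_natDegree_lt (by omega)

lemma polyMult_X_eq (h : F[X]) (h0 : h ≠ 0) :
    polyMult X h = h.natTrailingDegree := by
  have : {t : ℕ | X ^ t ∣ h} = Set.Iic h.natTrailingDegree := by
    ext t
    simp only [Set.mem_setOf_eq, Set.mem_Iic, X_pow_dvd_iff]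
    constructor
    · intro ht
      by_contra hlt
      exact h0 (trailingCoeff_eq_zero.mp (ht _ (lt_of_not_ge hlt)))
    · exact fun ht d hd => coeff_eq_zero_of_lt_natTrailingDegree (lt_of_lt_of_le hd ht)
  rw [polyMult, this, csSup_Iic]

end Aux

theorem statement_1 {F : Type*} [Field F] {n : ℕ}
    (P : Matrix (Fin n) (Fin n) F[X]) (g : ℕ)
    (hreg : P.det ≠ 0)
    (hdeg : ∀ i j, (P i j).degree ≤ (g : WithBot ℕ)) :
    (P.det).natDegree + polyMult X ((revMat g P).det) = g * n ∧
    ((∃ i j, (P i j).degree = (g : WithBot ℕ)) ∧ IsUnit (leadMat P g).det →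
      (P.det).natDegree = g * n) := by
  have hnat : ∀ i j, (P i j).natDegree ≤ g := fun i j =>
    natDegree_le_iff_degree_le.mpr (hdeg i j)
  -- det of the reversal is the reflect of det
  have hRdet : (revMat g P).det = reflect (g * n) P.det := by
    rw [Matrix.det_apply', Matrix.det_apply', reflect_sum']
    refine Finset.sum_congr rfl (fun σ _ => ?_)
    rw [← C_eq_intCast, reflect_C_mul]
    congr 1
    calc (∏ i : Fin n, revMat g P (σ i) i)
        = ∏ i : Fin n, reflect g (P (σ i) i) :=
          Finset.prod_congr rfl fun i _ =>
            revMat_entry_eq_reflect g (P (σ i) i) (hnat (σ i) i)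
      _ = reflect (g * n) (∏ i : Fin n, P (σ i) i) := by
          rw [← reflect_prod' Finset.univ _ g (fun i _ => hnat (σ i) i)]
          simp [Finset.card_univ]
  have hdegdet : P.det.natDegree ≤ g * n := by
    rw [Matrix.det_apply']
    refine le_trans (natDegree_sum_le _ _) ?_
    rw [Finset.fold_max_le]
    refine ⟨Nat.zero_le _, fun σ _ => ?_⟩
    refine le_trans (natDegree_mul_le) ?_
    rw [natDegree_intCast, zero_add]
    refine le_trans (natDegree_prod_le _ _) ?_
    calc ∑ i : Fin n, (P (σ i) i).natDegree ≤ ∑ _i : Fin n, g :=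
          Finset.sum_le_sum (fun i _ => hnat (σ i) i)
      _ = g * n := by simp [Finset.sum_const, mul_comm]
  have hR0 : (revMat g P).det ≠ 0 := by
    rw [hRdet]; exact fun h => hreg (reflect_eq_zero_iff.mp h)
  have hmain : (P.det).natDegree + polyMult X ((revMat g P).det) = g * n := by
    rw [polyMult_X_eq _ hR0, hRdet, natTrailingDegree_reflect' _ _ hreg hdegdet]
    omega
  refine ⟨hmain, fun ⟨_, hunit⟩ => ?_⟩
  -- constant coefficient of the reversed determinant is det of the leading matrix
  have hmap : (revMat g P).map (eval 0) = leadMat P g := by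
    ext i j
    simp only [Matrix.map_apply, revMat, leadMat, Matrix.of_apply, eval_finset_sum,
      eval_mul, eval_pow, eval_C, eval_X]
    rw [Finset.sum_eq_single_of_mem g (Finset.self_mem_range_succ g)]
    · simp
    · intro t ht htg
      have : 0 < g - t := by
        have := Finset.mem_range.mp ht; omega
      simp only [zero_pow (by omega : g - t ≠ 0), mul_zero]
  have hcoeff : ((revMat g P).det).coeff 0 ≠ 0 := by
    have hdet := RingHom.map_det (evalRingHom (0 : F)) (revMat g P)
    simp only [coe_evalRingHom, RingHom.mapMatrix_apply] at hdet
    rw [coeff_zero_eq_eval_zero, hdet, hmap]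
    exact hunit.ne_zero
  have hv : polyMult X ((revMat g P).det) = 0 := by
    rw [polyMult_X_eq _ hR0]
    exact Nat.le_zero.mp (natTrailingDegree_le_of_ne_zero hcoeff)
  omega
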